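/- Let V be a right Banach ℍ-module and T ∈ B(V). If q ∈ σ_S(T) is a right eigenvalue of finite type of T, then [q] is an isolated part of σ_S(T) (i.e., both [q] and σ_S(T) ∖ [q] are closed subsets of ℍ) and moreover N(Q_q(T)) ≠ {0}, i.e., q belongs to the point S-spectrum of T. -/

import Mathlib

/-!
Quaternionic setting: `ℍ` is the real quaternions.  A right Banach `ℍ`-module is
formalized as a real Banach space `V` together with a compatible `Module ℍᵐᵒᵖ V`
structure (right `ℍ`-action) satisfying `‖x • q‖ = ‖x‖ * |q|`; bounded right
`ℍ`-linear operators are the continuous `ℍᵐᵒᵖ`-linear maps `V →L[ℍᵐᵒᵖ] V`.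
-/

open MulOpposite

notation "ℍ" => Quaternion ℝ

section Defs

variable {W : Type*} [NormedAddCommGroup W] [Module ℍᵐᵒᵖ W] [Module ℝ W]
  [SMulCommClass ℍᵐᵒᵖ ℝ W] [ContinuousConstSMul ℝ W]

/-- `Q_q(T) = T² − 2 Re(q) T + |q|² I`. -/
noncomputable def Qs (T : W →L[ℍᵐᵒᵖ] W) (q : ℍ) : W →L[ℍᵐᵒᵖ] W :=
  T * T - (2 * q.re) • T + (‖q‖ ^ 2) • (1 : W →L[ℍᵐᵒᵖ] W)

/-- The S-resolvent set: `q` such that `Q_q(T)` is bijective with bounded inverse,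
i.e. invertible in the ring `B(W)`. -/
noncomputable def sResolvent (T : W →L[ℍᵐᵒᵖ] W) : Set ℍ :=
  {q | IsUnit (Qs T q)}

/-- The S-spectrum `σ_S(T) = ℍ \ ρ_S(T)`. -/
noncomputable def sSpectrum (T : W →L[ℍᵐᵒᵖ] W) : Set ℍ :=
  {q | ¬ IsUnit (Qs T q)}

/-- A compact operator: the image of the closed unit ball is relatively compact. -/
def IsCompactOp (K : W →L[ℍᵐᵒᵖ] W) : Prop :=
  IsCompact (closure (⇑K '' Metric.closedBall (0 : W) 1))

/-- `S` is a quasi-inverse of `T` if `S T = I - K₁` and `T S = I - K₂` with `K₁, K₂` compact. -/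
def IsQuasiInverse (S T : W →L[ℍᵐᵒᵖ] W) : Prop :=
  ∃ K₁ K₂ : W →L[ℍᵐᵒᵖ] W, IsCompactOp K₁ ∧ IsCompactOp K₂ ∧
    S * T = 1 - K₁ ∧ T * S = 1 - K₂

/-- The essential S-spectrum: `q` such that `Q_q(T)` admits no quasi-inverse. -/
noncomputable def essSpectrum (T : W →L[ℍᵐᵒᵖ] W) : Set ℍ :=
  {q | ¬ ∃ S : W →L[ℍᵐᵒᵖ] W, IsQuasiInverse S (Qs T q)}

/-- The Weyl S-spectrum: `⋂ σ_S(T + K)` over all compact `K`. -/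
noncomputable def weylSpectrum (T : W →L[ℍᵐᵒᵖ] W) : Set ℍ :=
  ⋂ K ∈ {K : W →L[ℍᵐᵒᵖ] W | IsCompactOp K}, sSpectrum (T + K)

/-- The 2-sphere `[q] = {h q h⁻¹ : h ∈ ℍ \ {0}}`. -/
def qSphere (q : ℍ) : Set ℍ := {p | ∃ h : ℍ, h ≠ 0 ∧ p = h * q * h⁻¹}

/-- Minimum modulus `μ(T) = inf {‖T x‖ : ‖x‖ = 1}`. -/
noncomputable def muMin (T : W →L[ℍᵐᵒᵖ] W) : ℝ :=
  sInf {c : ℝ | ∃ x : W, ‖x‖ = 1 ∧ c = ‖T x‖}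

/-- Operator norm of a bounded right `ℍ`-linear operator. -/
noncomputable def opNorm (T : W →L[ℍᵐᵒᵖ] W) : ℝ :=
  sInf {c : ℝ | 0 ≤ c ∧ ∀ x : W, ‖T x‖ ≤ c * ‖x‖}

/-- Restriction of `T` to an invariant submodule. -/
noncomputable def restrictOp (T : W →L[ℍᵐᵒᵖ] W) (M : Submodule ℍᵐᵒᵖ W)
    (h : ∀ x ∈ M, T x ∈ M) : ↥M →L[ℍᵐᵒᵖ] ↥M where
  toLinearMap := (T : W →ₗ[ℍᵐᵒᵖ] W).restrict h
  cont := Continuous.subtype_mk (T.continuous.comp continuous_subtype_val) _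

end Defs

section Sub

variable {V : Type*} [NormedAddCommGroup V] [NormedSpace ℝ V]
  [Module ℍᵐᵒᵖ V] [IsScalarTower ℝ ℍᵐᵒᵖ V] [SMulCommClass ℍᵐᵒᵖ ℝ V]

instance (M : Submodule ℍᵐᵒᵖ V) : SMulCommClass ℍᵐᵒᵖ ℝ ↥M := by
  constructor
  intro q r x
  apply Subtype.ext
  simp only [Submodule.coe_smul_of_tower, SetLike.val_smul]
  exact smul_comm q r (x : V)

instance (M : Submodule ℍᵐᵒᵖ V) : ContinuousConstSMul ℝ ↥M := by
  constructor
  intro r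
  have h : Continuous fun x : ↥M => r • (x : V) :=
    (continuous_const_smul r).comp continuous_subtype_val
  exact Continuous.subtype_mk h _

/-- `q` is a right eigenvalue of finite type of `T`: `V` is the direct sum of two closed
`T`-invariant right `ℍ`-submodules `M₁`, `M₂` with `M₁` finite-dimensional over `ℍ`,
`σ_S(T|M₁) ∩ σ_S(T|M₂) = ∅` and `σ_S(T|M₁) = [q]`. -/
noncomputable def IsFiniteTypeEigenvalue (T : V →L[ℍᵐᵒᵖ] V) (q : ℍ) : Prop :=
  ∃ (M₁ M₂ : Submodule ℍᵐᵒᵖ V) (h₁ : ∀ x ∈ M₁, T x ∈ M₁) (h₂ : ∀ x ∈ M₂, T x ∈ M₂),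
    IsClosed (M₁ : Set V) ∧ IsClosed (M₂ : Set V) ∧ IsCompl M₁ M₂ ∧
    FiniteDimensional ℍᵐᵒᵖ ↥M₁ ∧
    sSpectrum (restrictOp T M₁ h₁) ∩ sSpectrum (restrictOp T M₂ h₂) = ∅ ∧
    sSpectrum (restrictOp T M₁ h₁) = qSphere q

end Sub

-- ==================== auxiliary lemmas ====================

section Aux1

lemma mem_qSphere_self (q : ℍ) : q ∈ qSphere q := ⟨1, one_ne_zero, by simp⟩

lemma isClosed_qSphere (q : ℍ) : IsClosed (qSphere q) := by
  have himg : qSphere q = (fun h : ℍ => h * q * star h) '' Metric.sphere (0:ℍ) 1 := by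
    ext p
    constructor
    · rintro ⟨h, hh, rfl⟩
      have hn : ‖h‖ ≠ 0 := norm_ne_zero_iff.mpr hh
      refine ⟨(‖h‖⁻¹ : ℝ) • h, ?_, ?_⟩
      · simp [norm_smul, abs_of_nonneg, inv_mul_cancel₀ hn]
      · show (‖h‖⁻¹ • h) * q * star (‖h‖⁻¹ • h) = h * q * h⁻¹
        have hinv : h⁻¹ = (‖h‖⁻¹ * ‖h‖⁻¹) • star h := by
          rw [Quaternion.inv_def, Quaternion.normSq_eq_norm_mul_self, mul_inv]
        rw [hinv, Quaternion.star_smul, smul_mul_assoc, smul_mul_assoc, mul_smul_comm,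
          mul_smul_comm, smul_smul]
    · rintro ⟨h, hh, rfl⟩
      have hn : ‖h‖ = 1 := by simpa using hh
      have h0 : h ≠ 0 := by
        intro h0; rw [h0] at hn; simp at hn
      refine ⟨h, h0, ?_⟩
      have : h⁻¹ = star h := by
        rw [Quaternion.inv_def, Quaternion.normSq_eq_norm_mul_self, hn]
        simp
      rw [this]
  rw [himg]
  exact ((isCompact_sphere 0 1).image
    ((continuous_id.mul continuous_const).mul continuous_star)).isClosed

end Aux1

section Aux2

variable {V : Type*} [NormedAddCommGroup V] [NormedSpace ℝ V]
  [Module ℍᵐᵒᵖ V] [IsScalarTower ℝ ℍᵐᵒᵖ V] [SMulCommClass ℍᵐᵒᵖ ℝ V]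

lemma restrictOp_coe (T : V →L[ℍᵐᵒᵖ] V) (M : Submodule ℍᵐᵒᵖ V)
    (h : ∀ x ∈ M, T x ∈ M) (x : ↥M) : ((restrictOp T M h x : ↥M) : V) = T (x : V) := rfl

lemma Qs_mem (T : V →L[ℍᵐᵒᵖ] V) (M : Submodule ℍᵐᵒᵖ V)
    (hT : ∀ x ∈ M, T x ∈ M) (p : ℍ) : ∀ x ∈ M, Qs T p x ∈ M := by
  intro x hx
  have h1 : T (T x) ∈ M := hT _ (hT _ hx)
  have h2 : (2*p.re) • T x ∈ M := M.smul_of_tower_mem _ (hT _ hx)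
  have h3 : (‖p‖^2) • x ∈ M := M.smul_of_tower_mem _ hx
  have : Qs T p x = (T (T x) - (2*p.re) • T x) + (‖p‖^2) • x := by
    simp [Qs, ContinuousLinearMap.mul_apply]
  rw [this]
  exact M.add_mem (M.sub_mem h1 h2) h3

lemma Qs_restrict_coe (T : V →L[ℍᵐᵒᵖ] V) (M : Submodule ℍᵐᵒᵖ V)
    (hT : ∀ x ∈ M, T x ∈ M) (p : ℍ) (x : ↥M) :
    ((Qs (restrictOp T M hT) p x : ↥M) : V) = Qs T p (x : V) := by
  simp [Qs, ContinuousLinearMap.mul_apply, restrictOp_coe]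

lemma Qs_restrict (T : V →L[ℍᵐᵒᵖ] V) (M : Submodule ℍᵐᵒᵖ V)
    (hT : ∀ x ∈ M, T x ∈ M) (p : ℍ) :
    Qs (restrictOp T M hT) p = restrictOp (Qs T p) M (Qs_mem T M hT p) := by
  ext x
  rw [Qs_restrict_coe, restrictOp_coe]

/-- forward block lemma -/
lemma isUnit_restrictOp_of_isUnit {A : V →L[ℍᵐᵒᵖ] V} {M₁ M₂ : Submodule ℍᵐᵒᵖ V}
    (hc : IsCompl M₁ M₂) (hA₁ : ∀ x ∈ M₁, A x ∈ M₁) (hA₂ : ∀ x ∈ M₂, A x ∈ M₂)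
    (hU : IsUnit A) : IsUnit (restrictOp A M₁ hA₁) := by
  obtain ⟨B, hAB, hBA⟩ := isUnit_iff_exists.mp hU
  have hAB' : ∀ x, A (B x) = x := fun x => by
    have := DFunLike.congr_fun hAB x
    simpa [ContinuousLinearMap.mul_apply] using this
  have hBA' : ∀ x, B (A x) = x := fun x => by
    have := DFunLike.congr_fun hBA x
    simpa [ContinuousLinearMap.mul_apply] using this
  have hB₁ : ∀ y ∈ M₁, B y ∈ M₁ := by
    intro y hy
    obtain ⟨a, b, ha, hb, hab⟩ := Submodule.codisjoint_iff_exists_add_eq.mp hc.codisjoint (B y)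
    have hab' : A a + A b = y := by
      rw [← map_add, hab, hAB']
    have hmem : A b ∈ M₁ ⊓ M₂ := by
      refine ⟨?_, hA₂ _ hb⟩
      have : A b = y - A a := by rw [← hab']; abel
      rw [this]
      exact M₁.sub_mem hy (hA₁ _ ha)
    rw [hc.inf_eq_bot] at hmem
    have hb0 : b = 0 := by
      have := hBA' b
      rw [(Submodule.mem_bot _).mp hmem] at this
      simpa using this.symm
    rw [← hab, hb0, add_zero]
    exact ha
  refine isUnit_iff_exists.mpr ⟨restrictOp B M₁ hB₁, ?_, ?_⟩ <;>
  · ext x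
    simp [ContinuousLinearMap.mul_apply, restrictOp_coe, hAB', hBA']

end Aux2

section Aux3

variable {V : Type*} [NormedAddCommGroup V] [NormedSpace ℝ V]
  [Module ℍᵐᵒᵖ V] [IsScalarTower ℝ ℍᵐᵒᵖ V] [SMulCommClass ℍᵐᵒᵖ ℝ V]

/-- Upgrade a real-linear continuous inverse to an `ℍᵐᵒᵖ`-linear one. -/
lemma isUnit_restrictScalars_iff (A : V →L[ℍᵐᵒᵖ] V) :
    IsUnit (A.restrictScalars ℝ) ↔ IsUnit A := by
  constructor
  · intro h
    obtain ⟨C, hAC, hCA⟩ := isUnit_iff_exists.mp h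
    have hAC' : ∀ x, A (C x) = x := fun x => by
      have := DFunLike.congr_fun hAC x
      simpa [ContinuousLinearMap.mul_apply] using this
    have hCA' : ∀ x, C (A x) = x := fun x => by
      have := DFunLike.congr_fun hCA x
      simpa [ContinuousLinearMap.mul_apply] using this
    let D : V →L[ℍᵐᵒᵖ] V :=
      { toFun := C
        map_add' := fun x y => map_add C x y
        map_smul' := fun m x => by
          simp only [RingHom.id_apply]
          calc C (m • x) = C (m • A (C x)) := by rw [hAC']
            _ = C (A (m • C x)) := by rw [← A.map_smul m (C x)]
            _ = m • C x := hCA' _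
        cont := C.cont }
    refine isUnit_iff_exists.mpr ⟨D, ?_, ?_⟩ <;>
    · ext x
      simp only [ContinuousLinearMap.mul_apply, ContinuousLinearMap.one_apply]
      first
        | exact hAC' x
        | exact hCA' x
  · intro h
    obtain ⟨B, hAB, hBA⟩ := isUnit_iff_exists.mp h
    refine isUnit_iff_exists.mpr ⟨B.restrictScalars ℝ, ?_, ?_⟩
    · rw [show A.restrictScalars ℝ * B.restrictScalars ℝ = (A*B).restrictScalars ℝ from rfl, hAB]
      rfl
    · rw [show B.restrictScalars ℝ * A.restrictScalars ℝ = (B*A).restrictScalars ℝ from rfl, hBA]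
      rfl

lemma isClosed_sSpectrum [CompleteSpace V] (T : V →L[ℍᵐᵒᵖ] V) :
    IsClosed (sSpectrum T) := by
  have h1 : sSpectrum T = {q : ℍ | IsUnit (Qs T q)}ᶜ := rfl
  rw [h1, isClosed_compl_iff]
  have h2 : {q : ℍ | IsUnit (Qs T q)} =
      (fun q : ℍ => (Qs T q).restrictScalars ℝ) ⁻¹' {A : V →L[ℝ] V | IsUnit A} := by
    ext p
    simp only [Set.mem_setOf_eq, Set.mem_preimage]
    exact (isUnit_restrictScalars_iff (Qs T p)).symm
  rw [h2]
  have hcont : Continuous (fun q : ℍ => (Qs T q).restrictScalars ℝ) := by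
    have : (fun q : ℍ => (Qs T q).restrictScalars ℝ) =
        fun q : ℍ => (T*T).restrictScalars ℝ - (2*q.re) • T.restrictScalars ℝ
          + (‖q‖^2) • (1 : V →L[ℝ] V) := by
      funext q; rfl
    rw [this]
    apply Continuous.add
    · exact Continuous.sub continuous_const
        (((continuous_const.mul Quaternion.continuous_re)).smul continuous_const)
    · exact ((continuous_norm.pow 2).smul continuous_const)
  exact hcont.isOpen_preimage _ Units.isOpen

/-- Injective implies unit, in finite dimension. -/
lemma isUnit_of_ker_eq_bot [FiniteDimensional ℍᵐᵒᵖ V]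
    (A : V →L[ℍᵐᵒᵖ] V) (h : LinearMap.ker (A : V →ₗ[ℍᵐᵒᵖ] V) = ⊥) : IsUnit A := by
  haveI : FiniteDimensional ℝ V := Module.Finite.trans ℍᵐᵒᵖ V
  have hinj : Function.Injective A := LinearMap.ker_eq_bot.mp h
  have hsurj : Function.Surjective A :=
    (LinearMap.injective_iff_surjective (f := (A : V →ₗ[ℍᵐᵒᵖ] V))).mp hinj
  let e : V ≃ₗ[ℍᵐᵒᵖ] V := LinearEquiv.ofBijective (A : V →ₗ[ℍᵐᵒᵖ] V) ⟨hinj, hsurj⟩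
  have hcont : Continuous e.symm :=
    ((e.symm : V →ₗ[ℍᵐᵒᵖ] V).restrictScalars ℝ).continuous_of_finiteDimensional
  refine isUnit_iff_exists.mpr ⟨⟨e.symm.toLinearMap, hcont⟩, ?_, ?_⟩ <;>
  · ext x
    simp only [ContinuousLinearMap.mul_apply, ContinuousLinearMap.one_apply,
      ContinuousLinearMap.coe_mk', LinearEquiv.coe_coe]
    first
      | exact e.apply_symm_apply x
      | exact e.symm_apply_apply x

end Aux3

section Aux4

variable {V : Type*} [NormedAddCommGroup V] [NormedSpace ℝ V] [CompleteSpace V]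
  [Module ℍᵐᵒᵖ V] [IsScalarTower ℝ ℍᵐᵒᵖ V] [SMulCommClass ℍᵐᵒᵖ ℝ V]

/-- The `ℍᵐᵒᵖ`-linear projection onto `M₁` along `M₂` is continuous (via the real
Banach-space projection). -/
lemma continuous_linearProjOfIsCompl {M₁ M₂ : Submodule ℍᵐᵒᵖ V} (hc : IsCompl M₁ M₂)
    (hM₁ : IsClosed (M₁ : Set V)) (hM₂ : IsClosed (M₂ : Set V)) :
    Continuous (M₁.linearProjOfIsCompl M₂ hc) := by
  set p := M₁.restrictScalars ℝ
  set p' := M₂.restrictScalars ℝ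
  have hcR : IsCompl p p' := by
    constructor
    · rw [Submodule.disjoint_def]
      intro x h1 h2
      exact Submodule.disjoint_def.mp hc.disjoint x h1 h2
    · rw [codisjoint_iff, eq_top_iff]
      rintro x -
      obtain ⟨y, z, hy, hz, hyz⟩ := Submodule.codisjoint_iff_exists_add_eq.mp hc.codisjoint x
      rw [← hyz]
      exact Submodule.add_mem_sup hy hz
  have hpc : IsClosed (p : Set V) := hM₁
  have hp'c : IsClosed (p' : Set V) := hM₂
  set πR := p.linearProjOfClosedCompl p' hcR hpc hp'c
  have key : ∀ x : V, ((M₁.linearProjOfIsCompl M₂ hc x : V)) = ((πR x : V)) := by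
    intro x
    obtain ⟨y, z, hy, hz, hyz⟩ := Submodule.codisjoint_iff_exists_add_eq.mp hc.codisjoint x
    rw [← hyz, map_add, map_add]
    have e1 : M₁.linearProjOfIsCompl M₂ hc y = ⟨y, hy⟩ :=
      Submodule.linearProjOfIsCompl_apply_left hc ⟨y, hy⟩
    have e2 : M₁.linearProjOfIsCompl M₂ hc z = 0 :=
      Submodule.linearProjOfIsCompl_apply_right' hc hz
    have e3 : πR y = ⟨y, hy⟩ := by
      rw [show πR y = p.linearProjOfIsCompl p' hcR y from
        congrFun (Submodule.coe_continuous_linearProjOfClosedCompl' hcR hpc hp'c) y]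
      exact Submodule.linearProjOfIsCompl_apply_left hcR ⟨y, hy⟩
    have e4 : πR z = 0 := by
      rw [show πR z = p.linearProjOfIsCompl p' hcR z from
        congrFun (Submodule.coe_continuous_linearProjOfClosedCompl' hcR hpc hp'c) z]
      exact Submodule.linearProjOfIsCompl_apply_right' hcR hz
    rw [e1, e2, e3, e4]
    rfl
  refine continuous_induced_rng.mpr ?_
  have : (Subtype.val ∘ (M₁.linearProjOfIsCompl M₂ hc)) = fun x => ((πR x : V)) := by
    funext x; exact key x
  rw [this]
  exact continuous_subtype_val.comp πR.continuous

/-- Continuous projection onto `M₁` along `M₂`, as an `ℍᵐᵒᵖ`-linear CLM. -/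
noncomputable def projCLM {M₁ M₂ : Submodule ℍᵐᵒᵖ V} (hc : IsCompl M₁ M₂)
    (hM₁ : IsClosed (M₁ : Set V)) (hM₂ : IsClosed (M₂ : Set V)) : V →L[ℍᵐᵒᵖ] ↥M₁ where
  toLinearMap := M₁.linearProjOfIsCompl M₂ hc
  cont := continuous_linearProjOfIsCompl hc hM₁ hM₂

lemma projCLM_apply {M₁ M₂ : Submodule ℍᵐᵒᵖ V} (hc : IsCompl M₁ M₂)
    (hM₁ : IsClosed (M₁ : Set V)) (hM₂ : IsClosed (M₂ : Set V)) (x : V) :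
    projCLM hc hM₁ hM₂ x = M₁.linearProjOfIsCompl M₂ hc x := rfl

/-- backward block lemma -/
lemma isUnit_of_isUnit_restrictOp {A : V →L[ℍᵐᵒᵖ] V} {M₁ M₂ : Submodule ℍᵐᵒᵖ V}
    (hc : IsCompl M₁ M₂) (hM₁ : IsClosed (M₁ : Set V)) (hM₂ : IsClosed (M₂ : Set V))
    (hA₁ : ∀ x ∈ M₁, A x ∈ M₁) (hA₂ : ∀ x ∈ M₂, A x ∈ M₂)
    (hU₁ : IsUnit (restrictOp A M₁ hA₁)) (hU₂ : IsUnit (restrictOp A M₂ hA₂)) :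
    IsUnit A := by
  obtain ⟨B₁, hS₁B₁, hB₁S₁⟩ := isUnit_iff_exists.mp hU₁
  obtain ⟨B₂, hS₂B₂, hB₂S₂⟩ := isUnit_iff_exists.mp hU₂
  set π₁ := projCLM hc hM₁ hM₂
  set π₂ := projCLM hc.symm hM₂ hM₁
  have hdecomp : ∀ x : V, ((π₁ x : V)) + ((π₂ x : V)) = x := fun x =>
    Submodule.projection_add_projection_eq_self hc x
  have hS₁B₁' : ∀ w : ↥M₁, restrictOp A M₁ hA₁ (B₁ w) = w := fun w => by
    have := DFunLike.congr_fun hS₁B₁ w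
    simpa [ContinuousLinearMap.mul_apply] using this
  have hB₁S₁' : ∀ w : ↥M₁, B₁ (restrictOp A M₁ hA₁ w) = w := fun w => by
    have := DFunLike.congr_fun hB₁S₁ w
    simpa [ContinuousLinearMap.mul_apply] using this
  have hS₂B₂' : ∀ w : ↥M₂, restrictOp A M₂ hA₂ (B₂ w) = w := fun w => by
    have := DFunLike.congr_fun hS₂B₂ w
    simpa [ContinuousLinearMap.mul_apply] using this
  have hB₂S₂' : ∀ w : ↥M₂, B₂ (restrictOp A M₂ hA₂ w) = w := fun w => by
    have := DFunLike.congr_fun hB₂S₂ w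
    simpa [ContinuousLinearMap.mul_apply] using this
  set B : V →L[ℍᵐᵒᵖ] V :=
    M₁.subtypeL.comp (B₁.comp π₁) + M₂.subtypeL.comp (B₂.comp π₂) with hB
  have hBapp : ∀ x : V, B x = ((B₁ (π₁ x) : V)) + ((B₂ (π₂ x) : V)) := fun x => rfl
  -- A ∘ incl = incl ∘ S on each factor
  have hAincl₁ : ∀ w : ↥M₁, A (w : V) = ((restrictOp A M₁ hA₁ w : V)) := fun w => rfl
  have hAincl₂ : ∀ w : ↥M₂, A (w : V) = ((restrictOp A M₂ hA₂ w : V)) := fun w => rfl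
  refine isUnit_iff_exists.mpr ⟨B, ?_, ?_⟩
  · -- A * B = 1
    ext x
    simp only [ContinuousLinearMap.mul_apply, ContinuousLinearMap.one_apply]
    rw [hBapp, map_add, hAincl₁, hAincl₂, hS₁B₁', hS₂B₂', hdecomp]
  · -- B * A = 1
    ext x
    simp only [ContinuousLinearMap.mul_apply, ContinuousLinearMap.one_apply]
    -- A x = (S₁ (π₁ x) : V) + (S₂ (π₂ x) : V)
    have hAx : A x = ((restrictOp A M₁ hA₁ (π₁ x) : V)) + ((restrictOp A M₂ hA₂ (π₂ x) : V)) := by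
      conv_lhs => rw [← hdecomp x]
      rw [map_add, hAincl₁, hAincl₂]
    have hπ₁Ax : π₁ (A x) = restrictOp A M₁ hA₁ (π₁ x) := by
      rw [hAx, map_add]
      have e1 : π₁ ((restrictOp A M₁ hA₁ (π₁ x) : V)) = restrictOp A M₁ hA₁ (π₁ x) :=
        Submodule.linearProjOfIsCompl_apply_left hc _
      have e2 : π₁ ((restrictOp A M₂ hA₂ (π₂ x) : V)) = 0 :=
        Submodule.linearProjOfIsCompl_apply_right' hc (restrictOp A M₂ hA₂ (π₂ x)).2
      rw [e1, e2, add_zero]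
    have hπ₂Ax : π₂ (A x) = restrictOp A M₂ hA₂ (π₂ x) := by
      rw [hAx, map_add]
      have e1 : π₂ ((restrictOp A M₁ hA₁ (π₁ x) : V)) = 0 :=
        Submodule.linearProjOfIsCompl_apply_right' hc.symm (restrictOp A M₁ hA₁ (π₁ x)).2
      have e2 : π₂ ((restrictOp A M₂ hA₂ (π₂ x) : V)) = restrictOp A M₂ hA₂ (π₂ x) :=
        Submodule.linearProjOfIsCompl_apply_left hc.symm _
      rw [e1, e2, zero_add]
    rw [hBapp, hπ₁Ax, hπ₂Ax, hB₁S₁', hB₂S₂', hdecomp]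
  done

end Aux4

theorem stmt18 {V : Type*} [NormedAddCommGroup V] [NormedSpace ℝ V] [CompleteSpace V]
    [Module ℍᵐᵒᵖ V] [IsScalarTower ℝ ℍᵐᵒᵖ V] [SMulCommClass ℍᵐᵒᵖ ℝ V]
    (hnorm : ∀ (x : V) (q : ℍ), ‖op q • x‖ = ‖x‖ * ‖q‖)
    (T : V →L[ℍᵐᵒᵖ] V) (q : ℍ) (hq : q ∈ sSpectrum T)
    (hft : IsFiniteTypeEigenvalue T q) :
    IsClosed (qSphere q) ∧ IsClosed (sSpectrum T \ qSphere q) ∧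
      LinearMap.ker (Qs T q : V →ₗ[ℍᵐᵒᵖ] V) ≠ ⊥ := by
  obtain ⟨M₁, M₂, h₁, h₂, hcl₁, hcl₂, hcompl, hfd, hdisj, hsph⟩ := hft
  haveI : CompleteSpace ↥M₂ := hcl₂.completeSpace_coe
  haveI : FiniteDimensional ℍᵐᵒᵖ ↥M₁ := hfd
  set T₁ := restrictOp T M₁ h₁ with hT₁
  set T₂ := restrictOp T M₂ h₂ with hT₂
  have hiff : ∀ p : ℍ, IsUnit (Qs T p) ↔ IsUnit (Qs T₁ p) ∧ IsUnit (Qs T₂ p) := by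
    intro p
    rw [hT₁, hT₂, Qs_restrict T M₁ h₁ p, Qs_restrict T M₂ h₂ p]
    constructor
    · intro h
      exact ⟨isUnit_restrictOp_of_isUnit hcompl (Qs_mem T M₁ h₁ p) (Qs_mem T M₂ h₂ p) h,
        isUnit_restrictOp_of_isUnit hcompl.symm (Qs_mem T M₂ h₂ p) (Qs_mem T M₁ h₁ p) h⟩
    · intro h
      exact isUnit_of_isUnit_restrictOp hcompl hcl₁ hcl₂
        (Qs_mem T M₁ h₁ p) (Qs_mem T M₂ h₂ p) h.1 h.2
  have hunion : sSpectrum T = sSpectrum T₁ ∪ sSpectrum T₂ := by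
    ext p
    simp only [sSpectrum, Set.mem_setOf_eq, Set.mem_union]
    rw [hiff p]
    tauto
  have hqmem : q ∈ qSphere q := mem_qSphere_self q
  have hqnot₂ : q ∉ sSpectrum T₂ := by
    intro hmem
    have hx : q ∈ sSpectrum T₁ ∩ sSpectrum T₂ := ⟨hsph ▸ hqmem, hmem⟩
    rw [hdisj] at hx
    exact hx
  refine ⟨isClosed_qSphere q, ?_, ?_⟩
  · have hset : sSpectrum T \ qSphere q = sSpectrum T₂ := by
      ext p
      constructor
      · rintro ⟨hp, hpn⟩
        rcases (hunion ▸ hp) with h | h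
        · exact absurd (hsph ▸ h) hpn
        · exact h
      · intro hp
        refine ⟨hunion ▸ Or.inr hp, fun hpn => ?_⟩
        have hx : p ∈ sSpectrum T₁ ∩ sSpectrum T₂ := ⟨hsph ▸ hpn, hp⟩
        rw [hdisj] at hx
        exact hx
    rw [hset]
    exact isClosed_sSpectrum T₂
  · have hu₂ : IsUnit (Qs T₂ q) := not_not.mp hqnot₂
    have hq1 : ¬ IsUnit (Qs T₁ q) := fun hu => hq ((hiff q).mpr ⟨hu, hu₂⟩)
    have hker₁ : LinearMap.ker (Qs T₁ q : ↥M₁ →ₗ[ℍᵐᵒᵖ] ↥M₁) ≠ ⊥ := fun hb => hq1 (isUnit_of_ker_eq_bot _ hb)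
    obtain ⟨x, hxker, hx0⟩ := Submodule.ne_bot_iff _ |>.mp hker₁
    rw [Submodule.ne_bot_iff]
    refine ⟨(x : V), ?_, by simpa using hx0⟩
    rw [LinearMap.mem_ker] at hxker ⊢
    rw [ContinuousLinearMap.coe_coe] at hxker ⊢
    have hcoe : ((Qs T₁ q x : ↥M₁) : V) = Qs T q (x : V) := Qs_restrict_coe T M₁ h₁ q x
    rw [← hcoe, hxker]
    rfl
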